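/- For the multicalibration boosting dynamics with relaxed rescaling weights w_t ∈ (0,1], the residual norm satisfies, for every t ≥ 0, ‖y − f_t‖₂ ≤ ρ_t ‖y − f₀‖₂ + (1 − ρ_t) ‖y‖₂, where ρ_t = ∏_{s=0}^{t−1} w_s (with ρ₀ = 1). -/

import Mathlib

open Matrix
open scoped BigOperators

/-- The action of a real matrix on vectors of `EuclideanSpace`. -/
noncomputable def mulVecE {m n : Type*} [Fintype m] [Fintype n] [DecidableEq n]
    (A : Matrix m n ℝ) (v : EuclideanSpace ℝ n) : EuclideanSpace ℝ m :=
  Matrix.toEuclideanLin A v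

lemma mulVecE_mul {n : Type*} [Fintype n] [DecidableEq n]
    (M N : Matrix n n ℝ) (v : EuclideanSpace ℝ n) :
    mulVecE (M * N) v = mulVecE M (mulVecE N v) := by
  simp [mulVecE, Matrix.toEuclideanLin_apply, Matrix.mulVec_mulVec]

lemma contract_step {n : Type*} [Fintype n] [DecidableEq n]
    (P : Matrix n n ℝ) (hs : Pᵀ = P) (hp : P * P = P)
    (η : ℝ) (hη0 : 0 < η) (hη1 : η ≤ 1) (v : EuclideanSpace ℝ n) :
    ‖v - η • mulVecE P v‖ ≤ ‖v‖ := by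
  set p : EuclideanSpace ℝ n := mulVecE P v with hpdef
  have hadj : ∀ x z : EuclideanSpace ℝ n,
      (inner ℝ (mulVecE P x) z : ℝ) = inner ℝ x (mulVecE P z) := by
    intro x z
    have := Matrix.toEuclideanLin_conjTranspose_eq_adjoint P
    have hPH : Pᴴ = P := by rw [Matrix.conjTranspose_eq_transpose_of_trivial]; exact hs
    rw [hPH] at this
    calc (inner ℝ (mulVecE P x) z : ℝ)
        = inner ℝ (Matrix.toEuclideanLin P x) z := rfl
      _ = inner ℝ x (LinearMap.adjoint (Matrix.toEuclideanLin P) z) := by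
          rw [← LinearMap.adjoint_inner_right]
      _ = inner ℝ x (mulVecE P z) := by rw [← this]; rfl
  have hpp : (inner ℝ p p : ℝ) = inner ℝ v p := by
    calc (inner ℝ p p : ℝ) = inner ℝ (mulVecE P v) (mulVecE P v) := rfl
      _ = inner ℝ v (mulVecE P (mulVecE P v)) := hadj v (mulVecE P v)
      _ = inner ℝ v (mulVecE (P * P) v) := by rw [mulVecE_mul]
      _ = inner ℝ v p := by rw [hp]
  have horth : (inner ℝ (v - p) p : ℝ) = 0 := by
    rw [inner_sub_left, hpp]; ring
  have hdecomp : v - η • p = (v - p) + (1 - η) • p := by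
    module
  have hvsum : v = (v - p) + p := by abel
  have h1 : ‖v - η • p‖ ^ 2 = ‖v - p‖ ^ 2 + (1 - η) ^ 2 * ‖p‖ ^ 2 := by
    rw [hdecomp, norm_add_sq_real, inner_smul_right, horth, norm_smul,
      Real.norm_eq_abs, abs_of_nonneg (by linarith : (0:ℝ) ≤ 1 - η)]
    ring
  have h2 : ‖v‖ ^ 2 = ‖v - p‖ ^ 2 + ‖p‖ ^ 2 := by
    conv_lhs => rw [hvsum]
    rw [norm_add_sq_real, horth]; ring
  have hsq : ‖v - η • p‖ ^ 2 ≤ ‖v‖ ^ 2 := by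
    rw [h1, h2]
    have h1η : (1 - η) ^ 2 ≤ 1 := by nlinarith
    nlinarith [sq_nonneg ‖p‖]
  nlinarith [norm_nonneg (v - η • p), norm_nonneg v]

/-- **Residual bound for multicalibration boosting with relaxed rescaling weights.**
For the dynamics `f_{t+1} = w_t (f_t + η A(f_t)(y - f_t))` with weights `w_t ∈ (0,1]` and
orthogonal projections `A(f)`, for every `t ≥ 0`:
`‖y - f_t‖₂ ≤ ρ_t ‖y - f₀‖₂ + (1 - ρ_t) ‖y‖₂` where `ρ_t = ∏_{s<t} w_s`. -/
theorem multicalibration_boosting_relaxed_residual_bound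
    {n : ℕ} (y : EuclideanSpace ℝ (Fin n)) (η : ℝ) (hη0 : 0 < η) (hη1 : η ≤ 1)
    (w : ℕ → ℝ) (hw : ∀ t, w t ∈ Set.Ioc (0 : ℝ) 1)
    (A : EuclideanSpace ℝ (Fin n) → Matrix (Fin n) (Fin n) ℝ)
    (hAsymm : ∀ f, (A f)ᵀ = A f) (hAproj : ∀ f, A f * A f = A f)
    (f : ℕ → EuclideanSpace ℝ (Fin n))
    (hf : ∀ t, f (t + 1) = w t • (f t + η • mulVecE (A (f t)) (y - f t))) :
    ∀ t : ℕ,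
      ‖y - f t‖ ≤ (∏ s ∈ Finset.range t, w s) * ‖y - f 0‖ +
        (1 - ∏ s ∈ Finset.range t, w s) * ‖y‖ := by
  intro t
  induction t with
  | zero => simp
  | succ t ih =>
    set ρ := ∏ s ∈ Finset.range t, w s with hρ
    have hwt := hw t
    obtain ⟨hw0, hw1⟩ := hwt
    have hρpos : 0 < ρ := Finset.prod_pos fun s _ => (hw s).1
    have hρle1 : ρ ≤ 1 := Finset.prod_le_one (fun s _ => (hw s).1.le) (fun s _ => (hw s).2)
    have hsplit : y - f (t + 1)
        = w t • ((y - f t) - η • mulVecE (A (f t)) (y - f t)) + (1 - w t) • y := by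
      rw [hf t]; module
    have hstep : ‖y - f (t + 1)‖ ≤ w t * ‖y - f t‖ + (1 - w t) * ‖y‖ := by
      rw [hsplit]
      calc ‖w t • ((y - f t) - η • mulVecE (A (f t)) (y - f t)) + (1 - w t) • y‖
          ≤ ‖w t • ((y - f t) - η • mulVecE (A (f t)) (y - f t))‖ + ‖(1 - w t) • y‖ :=
            norm_add_le _ _
        _ = w t * ‖(y - f t) - η • mulVecE (A (f t)) (y - f t)‖ + (1 - w t) * ‖y‖ := by
            rw [norm_smul, norm_smul, Real.norm_eq_abs, Real.norm_eq_abs,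
              abs_of_pos hw0, abs_of_nonneg (by linarith : (0:ℝ) ≤ 1 - w t)]
        _ ≤ w t * ‖y - f t‖ + (1 - w t) * ‖y‖ := by
            gcongr
            exact contract_step (A (f t)) (hAsymm (f t)) (hAproj (f t)) η hη0 hη1 _
    calc ‖y - f (t + 1)‖ ≤ w t * ‖y - f t‖ + (1 - w t) * ‖y‖ := hstep
      _ ≤ w t * (ρ * ‖y - f 0‖ + (1 - ρ) * ‖y‖) + (1 - w t) * ‖y‖ := by
          gcongr
      _ = (ρ * w t) * ‖y - f 0‖ + (1 - ρ * w t) * ‖y‖ := by ring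
      _ = (∏ s ∈ Finset.range (t + 1), w s) * ‖y - f 0‖ +
          (1 - ∏ s ∈ Finset.range (t + 1), w s) * ‖y‖ := by
          rw [Finset.prod_range_succ, ← hρ]
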